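/- Let s(n) = Σ_{k=0}^{⌊n/2⌋} C(n,2k)·k! for n ∈ ℕ. Then s(n) = n^{n/2 + o(n)}; that is, log s(n) / (n · log n) → 1/2 as n → ∞. -/

import Mathlib

open Real Filter

lemma pow_le_exp_mul_factorial (m : ℕ) : (m : ℝ) ^ m ≤ Real.exp m * m.factorial := by
  induction m with
  | zero => simp
  | succ m ih =>
    rcases Nat.eq_zero_or_pos m with rfl | hm
    · simpa using Real.one_le_exp (by norm_num)
    have hm0 : (0:ℝ) < m := by exact_mod_cast hm
    have h1 : ((m:ℝ) + 1) ^ m ≤ Real.exp 1 * (m:ℝ) ^ m := by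
      have : ((m:ℝ) + 1) = (m:ℝ) * (1 + 1/m) := by field_simp
      rw [this, mul_pow]
      have h2 : (1 + 1/(m:ℝ)) ^ m ≤ Real.exp 1 := by
        have := Real.add_one_le_exp (1/(m:ℝ))
        calc (1 + 1/(m:ℝ)) ^ m ≤ (Real.exp (1/m)) ^ m := by
              apply pow_le_pow_left₀ (by positivity) (by linarith)
          _ = Real.exp 1 := by
              rw [← Real.exp_nat_mul]; congr 1; field_simp
      calc (m:ℝ)^m * (1+1/m)^m ≤ (m:ℝ)^m * Real.exp 1 := by
            apply mul_le_mul_of_nonneg_left h2 (by positivity)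
        _ = Real.exp 1 * (m:ℝ)^m := by ring
    have key : ((m:ℝ)+1) ^ (m+1) ≤ ((m:ℝ)+1) * (Real.exp 1 * (m:ℝ)^m) := by
      rw [pow_succ]
      calc ((m:ℝ)+1)^m * ((m:ℝ)+1) ≤ (Real.exp 1 * (m:ℝ)^m) * ((m:ℝ)+1) :=
            mul_le_mul_of_nonneg_right h1 (by positivity)
        _ = ((m:ℝ)+1) * (Real.exp 1 * (m:ℝ)^m) := by ring
    push_cast
    calc ((m:ℝ)+1) ^ (m+1) ≤ ((m:ℝ)+1) * (Real.exp 1 * (m:ℝ)^m) := key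
      _ ≤ ((m:ℝ)+1) * (Real.exp 1 * (Real.exp m * m.factorial)) := by
          apply mul_le_mul_of_nonneg_left _ (by positivity)
          exact mul_le_mul_of_nonneg_left ih (by positivity)
      _ = Real.exp (m+1) * (m.factorial * (m+1)) := by rw [Real.exp_add]; ring
      _ = Real.exp ((m:ℝ)+1) * (((m:ℝ)+1) * m.factorial) := by ring
      _ = Real.exp ((m:ℝ)+1) * ((m+1).factorial : ℝ) := by
          rw [Nat.factorial_succ]; push_cast; ring

lemma log_factorial_lb (m : ℕ) : (m:ℝ) * Real.log m - m ≤ Real.log m.factorial := by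
  rcases Nat.eq_zero_or_pos m with rfl | hm
  · simp
  have h := pow_le_exp_mul_factorial m
  have hf : (0:ℝ) < m.factorial := by exact_mod_cast m.factorial_pos
  have := Real.log_le_log (by positivity) h
  rw [Real.log_pow, Real.log_mul (Real.exp_ne_zero _) (ne_of_gt hf), Real.log_exp] at this
  linarith

lemma log_factorial_ub (m : ℕ) : Real.log m.factorial ≤ (m:ℝ) * Real.log m := by
  rcases Nat.eq_zero_or_pos m with rfl | hm
  · simp
  have hf : (0:ℝ) < m.factorial := by exact_mod_cast m.factorial_pos
  have h : (m.factorial : ℝ) ≤ (m:ℝ)^m := by exact_mod_cast Nat.factorial_le_pow m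
  have := Real.log_le_log hf h
  rwa [Real.log_pow] at this

/-- `s(n) = Σ_{k=0}^{⌊n/2⌋} C(n,2k)·k!`. -/
def sSpeed (n : ℕ) : ℕ := ∑ k ∈ Finset.range (n / 2 + 1), n.choose (2 * k) * k.factorial

lemma sSpeed_lb (n : ℕ) : (n/2).factorial ≤ sSpeed n := by
  have hmem : n/2 ∈ Finset.range (n/2+1) := Finset.self_mem_range_succ _
  have hterm : (n/2).factorial ≤ n.choose (2*(n/2)) * (n/2).factorial := by
    have : 0 < n.choose (2*(n/2)) := Nat.choose_pos (Nat.mul_div_le n 2)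
    · calc (n/2).factorial = 1 * (n/2).factorial := (one_mul _).symm
        _ ≤ _ := Nat.mul_le_mul_right _ this
  exact hterm.trans (Finset.single_le_sum
    (f := fun k => n.choose (2*k) * k.factorial) (fun i _ => Nat.zero_le _) hmem)

lemma choose_le_two_pow' (n k : ℕ) : n.choose k ≤ 2 ^ n := by
  rcases le_or_gt k n with h | h
  · calc n.choose k ≤ ∑ m ∈ Finset.range (n+1), n.choose m :=
        Finset.single_le_sum (fun i _ => Nat.zero_le _) (Finset.mem_range_succ_iff.mpr h)
      _ = 2 ^ n := Nat.sum_range_choose n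
  · rw [Nat.choose_eq_zero_of_lt h]; exact Nat.zero_le _

lemma sSpeed_ub (n : ℕ) : sSpeed n ≤ (n/2 + 1) * (2 ^ n * (n/2).factorial) := by
  calc sSpeed n ≤ ∑ _k ∈ Finset.range (n/2+1), 2 ^ n * (n/2).factorial := by
        apply Finset.sum_le_sum
        intro k hk
        exact Nat.mul_le_mul (choose_le_two_pow' n _)
          (Nat.factorial_le (Nat.lt_succ_iff.mp (Finset.mem_range.mp hk)))
    _ = (n/2+1) * (2 ^ n * (n/2).factorial) := by
        rw [Finset.sum_const, Finset.card_range, smul_eq_mul]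

/-- `s(n) = n^{n/2 + o(n)}`, i.e. `log s(n) / (n log n) → 1/2`. -/
theorem stmt17 :
    Filter.Tendsto (fun n : ℕ => Real.log (sSpeed n) / ((n : ℝ) * Real.log n))
      Filter.atTop (nhds (1 / 2)) := by
  -- basic limits
  have hN : Tendsto (fun n : ℕ => (n:ℝ)) atTop atTop := tendsto_natCast_atTop_atTop
  have hinvN : Tendsto (fun n : ℕ => ((n:ℝ))⁻¹) atTop (nhds 0) := hN.inv_tendsto_atTop
  have hL : Tendsto (fun n : ℕ => Real.log n) atTop atTop :=
    Real.tendsto_log_atTop.comp hN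
  have hinvL : Tendsto (fun n : ℕ => (Real.log n)⁻¹) atTop (nhds 0) := hL.inv_tendsto_atTop
  -- the sandwiching functions
  set lo : ℕ → ℝ := fun n => ((((n:ℝ)-1)/2) * (Real.log n - Real.log 4) - (n:ℝ)/2) with hlo
  set hi : ℕ → ℝ := fun n => Real.log n + (n:ℝ) * Real.log 2 + ((n:ℝ)/2) * Real.log n with hhi
  have hlo_tendsto : Tendsto (fun n : ℕ => lo n / ((n:ℝ) * Real.log n)) atTop (nhds (1/2)) := by
    have heq : (fun n : ℕ => lo n / ((n:ℝ) * Real.log n))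
        =ᶠ[atTop] fun n : ℕ => (1/2 - (1/2) * ((n:ℝ))⁻¹) * (1 - Real.log 4 * (Real.log n)⁻¹)
          - (1/2) * (Real.log n)⁻¹ := by
      filter_upwards [eventually_ge_atTop 2] with n hn
      have hn0 : (0:ℝ) < n := by positivity
      have hn1 : (1:ℝ) < n := by exact_mod_cast Nat.lt_of_lt_of_le one_lt_two hn
      have hlog : Real.log n ≠ 0 := ne_of_gt (Real.log_pos hn1)
      have hn0' : (n:ℝ) ≠ 0 := ne_of_gt hn0
      simp only [hlo]
      field_simp
    have hmain : Tendsto (fun n : ℕ =>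
        (1/2 - (1/2) * ((n:ℝ))⁻¹) * (1 - Real.log 4 * (Real.log n)⁻¹)
          - (1/2) * (Real.log n)⁻¹) atTop
        (nhds ((1/2 - (1/2) * 0) * (1 - Real.log 4 * 0) - (1/2) * 0)) := by
      exact ((((tendsto_const_nhds.sub (hinvN.const_mul _))).mul
        (tendsto_const_nhds.sub (hinvL.const_mul _))).sub (hinvL.const_mul _))
    have hval : ((1/2 - (1/2) * 0) * (1 - Real.log 4 * 0) - (1/2) * 0 : ℝ) = 1/2 := by norm_num
    rw [hval] at hmain
    exact Tendsto.congr' heq.symm hmain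
  have hhi_tendsto : Tendsto (fun n : ℕ => hi n / ((n:ℝ) * Real.log n)) atTop (nhds (1/2)) := by
    have heq : (fun n : ℕ => hi n / ((n:ℝ) * Real.log n))
        =ᶠ[atTop] fun n : ℕ => ((n:ℝ))⁻¹ + Real.log 2 * (Real.log n)⁻¹ + 1/2 := by
      filter_upwards [eventually_ge_atTop 2] with n hn
      have hn0 : (0:ℝ) < n := by positivity
      have hn1 : (1:ℝ) < n := by exact_mod_cast Nat.lt_of_lt_of_le one_lt_two hn
      have hlog : Real.log n ≠ 0 := ne_of_gt (Real.log_pos hn1)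
      have hn0' : (n:ℝ) ≠ 0 := ne_of_gt hn0
      simp only [hhi]
      field_simp
    have hmain : Tendsto (fun n : ℕ =>
        ((n:ℝ))⁻¹ + Real.log 2 * (Real.log n)⁻¹ + 1/2) atTop
        (nhds (0 + Real.log 2 * 0 + 1/2)) :=
      (hinvN.add (hinvL.const_mul _)).add tendsto_const_nhds
    have hval : ((0:ℝ) + Real.log 2 * 0 + 1/2) = 1/2 := by norm_num
    rw [hval] at hmain
    exact Tendsto.congr' heq.symm hmain
  refine tendsto_of_tendsto_of_tendsto_of_le_of_le' hlo_tendsto hhi_tendsto ?_ ?_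
  · -- lower bound : lo n / (n log n) ≤ log s(n) / (n log n)
    filter_upwards [eventually_ge_atTop 4] with n hn
    have key : lo n ≤ Real.log (sSpeed n) := by
      set m := n / 2 with hm
      -- nat facts
      have h1 : n ≤ 2 * m + 1 := by omega
      have h2 : 2 * m ≤ n := by omega
      have h3 : n ≤ 4 * m := by omega
      have hm2 : 2 ≤ m := by omega
      have hmr1 : ((n:ℝ) - 1) / 2 ≤ m := by
        have : (n:ℝ) ≤ 2 * m + 1 := by exact_mod_cast h1
        linarith
      have hmr3 : (n:ℝ) / 4 ≤ m := by
        have : (n:ℝ) ≤ 4 * m := by exact_mod_cast h3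
        linarith
      have hn0 : (0:ℝ) < n := by positivity
      have hlogm : Real.log n - Real.log 4 ≤ Real.log m := by
        have h4 : Real.log ((n:ℝ)/4) ≤ Real.log m :=
          Real.log_le_log (by positivity) hmr3
        rwa [Real.log_div (ne_of_gt hn0) (by norm_num)] at h4
      have hlog4nonneg : 0 ≤ Real.log n - Real.log 4 := by
        have : Real.log 4 ≤ Real.log n := Real.log_le_log (by norm_num)
          (by exact_mod_cast hn)
        linarith
      have hmul : (((n:ℝ)-1)/2) * (Real.log n - Real.log 4) ≤ (m:ℝ) * Real.log m := by
        apply mul_le_mul hmr1 hlogm hlog4nonneg (by positivity)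
      have hfl : (m:ℝ) * Real.log m - m ≤ Real.log m.factorial := log_factorial_lb m
      have hml : (m:ℝ) ≤ (n:ℝ)/2 := by
        have : (2:ℝ) * m ≤ n := by exact_mod_cast h2
        linarith
      have hlogs : Real.log m.factorial ≤ Real.log (sSpeed n) := by
        apply Real.log_le_log (by exact_mod_cast m.factorial_pos)
        exact_mod_cast sSpeed_lb n
      simp only [hlo]
      calc (((n:ℝ)-1)/2) * (Real.log n - Real.log 4) - (n:ℝ)/2
          ≤ (m:ℝ) * Real.log m - m := by linarith
        _ ≤ Real.log m.factorial := hfl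
        _ ≤ Real.log (sSpeed n) := hlogs
    have hpos : (0:ℝ) ≤ (n:ℝ) * Real.log n := by
      have h1n : (1:ℕ) ≤ n := by omega
      have h1r : (1:ℝ) ≤ n := by exact_mod_cast h1n
      have := Real.log_nonneg h1r
      positivity
    gcongr
  · -- upper bound
    filter_upwards [eventually_ge_atTop 4] with n hn
    have key : Real.log (sSpeed n) ≤ hi n := by
      set m := n / 2 with hm
      have h2 : 2 * m ≤ n := by omega
      have hm1n : m + 1 ≤ n := by omega
      have hm2 : 2 ≤ m := by omega
      have hn0 : (0:ℝ) < n := by positivity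
      have hs_pos : (0:ℝ) < sSpeed n := by
        have h1 : 0 < sSpeed n := lt_of_lt_of_le m.factorial_pos (sSpeed_lb n)
        exact_mod_cast h1
      have hub : (sSpeed n : ℝ) ≤ ((m:ℝ)+1) * (2^n * m.factorial) := by
        have := sSpeed_ub n
        exact_mod_cast this
      have hstep : Real.log (sSpeed n) ≤
          Real.log (((m:ℝ)+1) * (2^n * m.factorial)) :=
        Real.log_le_log hs_pos hub
      have hfac : (0:ℝ) < (m.factorial : ℝ) := by exact_mod_cast m.factorial_pos
      rw [Real.log_mul (by positivity) (by positivity),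
        Real.log_mul (by positivity) (ne_of_gt hfac), Real.log_pow] at hstep
      have hA : Real.log ((m:ℝ)+1) ≤ Real.log n := by
        apply Real.log_le_log (by positivity)
        exact_mod_cast hm1n
      have hB : Real.log m.factorial ≤ ((n:ℝ)/2) * Real.log n := by
        refine (log_factorial_ub m).trans ?_
        have hml : (m:ℝ) ≤ (n:ℝ)/2 := by
          have : (2:ℝ) * m ≤ n := by exact_mod_cast h2
          linarith
        have hlogm : Real.log m ≤ Real.log n := by
          have hmpos : 0 < m := by omega
          have hmn : m ≤ n := by omega
          exact Real.log_le_log (by exact_mod_cast hmpos) (by exact_mod_cast hmn)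
        apply mul_le_mul hml hlogm (Real.log_nonneg (by exact_mod_cast hm2.trans' (by norm_num))) (by positivity)
      simp only [hhi]
      push_cast at hstep ⊢
      linarith
    have hpos : (0:ℝ) ≤ (n:ℝ) * Real.log n := by
      have h1n : (1:ℕ) ≤ n := by omega
      have h1r : (1:ℝ) ≤ n := by exact_mod_cast h1n
      have := Real.log_nonneg h1r
      positivity
    gcongr
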